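/- Let G be a graph and let (T, {X_t}) be a tree decomposition of G. For distinct nodes t', t'' of T, let P be the t',t''-path in T and define Y_t = X_t ∩ (X_{t'} ∪ X_{t''}) for t ∈ V(P). If X_{t'} ∪ X_{t''} = V(H) for H = G[X_{t'} ∪ X_{t''}] and every vertex and edge of H appears appropriately, then (P, {Y_t}_{t∈V(P)}) is a path decomposition of H; in particular, for every edge uv of H there is a node t ∈ V(P) with u, v ∈ Y_t. -/

import Mathlib

open SimpleGraph

/-- A set of vertices is independent if no two of its members are adjacent. -/
def SimpleGraph.IsIndep {V : Type} (G : SimpleGraph V) (s : Set V) : Prop :=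
  s.Pairwise fun u v => ¬ G.Adj u v

/-- The independence number of the subgraph of `G` induced by `W`:
the largest size of a finite independent set contained in `W`. -/
noncomputable def alphaOn {V : Type} (G : SimpleGraph V) (W : Set V) : ℕ :=
  sSup {n | ∃ S : Finset V, ↑S ⊆ W ∧ G.IsIndep ↑S ∧ S.card = n}

/-- A tree decomposition of `G` with decomposition tree `tree`. -/
structure TreeDecomp {V T : Type} (G : SimpleGraph V) (tree : SimpleGraph T) : Type where
  bag : T → Set V
  isTree : tree.IsTree
  mem_bag : ∀ v : V, ∃ t, v ∈ bag t
  edge_bag : ∀ ⦃u v : V⦄, G.Adj u v → ∃ t, u ∈ bag t ∧ v ∈ bag t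
  conn : ∀ v : V, (tree.induce {t | v ∈ bag t}).Connected

/-- `tree-α(G) ≤ k`: some tree decomposition of `G` has all bags of independence number `≤ k`. -/
def TreeAlphaLE {V : Type} (G : SimpleGraph V) (k : ℕ) : Prop :=
  ∃ (T : Type) (tree : SimpleGraph T) (td : TreeDecomp G tree),
    ∀ t : T, alphaOn G (td.bag t) ≤ k

section Aux
variable {T : Type} {tree : SimpleGraph T}

lemma aux_path_support_subset (ht : tree.IsAcyclic) {S : Set T}
    (hS : (tree.induce S).Connected) {a b : T} (ha : a ∈ S) (hb : b ∈ S)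
    {q : tree.Walk a b} (hq : q.IsPath) : ∀ c ∈ q.support, c ∈ S := by
  classical
  obtain ⟨w⟩ := hS ⟨a, ha⟩ ⟨b, hb⟩
  let w' : tree.Walk a b := w.map (SimpleGraph.Embedding.induce S).toHom
  have hsub : ∀ c ∈ w'.support, c ∈ S := by
    intro c hc
    rw [show w'.support = _ from Walk.support_map _ _, List.mem_map] at hc
    obtain ⟨x, _, rfl⟩ := hc
    exact x.2
  have huniq := SimpleGraph.isAcyclic_iff_path_unique.mp ht ⟨q, hq⟩ w'.toPath
  intro c hc
  have hq' : q = w'.bypass := congrArg Subtype.val huniq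
  exact hsub c (Walk.support_bypass_subset w' (hq' ▸ hc))

lemma aux_prefix {x y : T} (p : tree.Walk x y) :
    ∀ (l : ℕ) (hl : l < p.support.length),
    ∃ (c : T) (q : tree.Walk x c), c = p.support[l]'hl ∧
      q.support = p.support.take (l + 1) ∧ (p.IsPath → q.IsPath) := by
  induction p with
  | nil =>
    intro l hl
    simp only [Walk.support_nil, List.length_cons, List.length_nil] at hl
    interval_cases l
    exact ⟨_, Walk.nil, by simp, by simp, fun _ => Walk.IsPath.nil⟩
  | @cons a b c hadj r ih =>
    intro l hl
    match l with
    | 0 => exact ⟨a, Walk.nil, by simp, by simp, fun _ => Walk.IsPath.nil⟩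
    | Nat.succ l =>
      have hl' : l < r.support.length := by
        simpa [Walk.support_cons, Nat.succ_lt_succ_iff] using hl
      obtain ⟨c', q, hc', hsup, hpath⟩ := ih l hl'
      refine ⟨c', Walk.cons hadj q, ?_, ?_, ?_⟩
      · rw [hc']
        simp [Walk.support_cons]
      · simp [Walk.support_cons, hsup]
      · intro hP
        rw [Walk.cons_isPath_iff] at hP ⊢
        refine ⟨hpath hP.1, fun hmem => hP.2 ?_⟩
        exact List.mem_of_mem_take (hsup ▸ hmem)

lemma aux_suffix {x y : T} (p : tree.Walk x y) :
    ∀ (i : ℕ) (hi : i < p.support.length),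
    ∃ (c : T) (q : tree.Walk c y), c = p.support[i]'hi ∧
      q.support = p.support.drop i ∧ (p.IsPath → q.IsPath) := by
  induction p with
  | nil =>
    intro i hi
    simp only [Walk.support_nil, List.length_cons, List.length_nil] at hi
    interval_cases i
    exact ⟨_, Walk.nil, by simp, by simp, fun _ => Walk.IsPath.nil⟩
  | @cons a b c hadj r ih =>
    intro i hi
    match i with
    | 0 => exact ⟨a, Walk.cons hadj r, by simp, by simp, fun hP => hP⟩
    | Nat.succ i =>
      have hi' : i < r.support.length := by
        simpa [Walk.support_cons, Nat.succ_lt_succ_iff] using hi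
      obtain ⟨c', q, hc', hsup, hpath⟩ := ih i hi'
      exact ⟨c', q, by rw [hc']; simp [Walk.support_cons],
        by simp [Walk.support_cons, hsup], fun hP => hpath hP.of_cons⟩

lemma aux_first (L : List T) : ∀ {s c : T} (r : tree.Walk s c), r.IsPath → c ∈ L →
    ∃ m ∈ L, ∃ r1 : tree.Walk s m, r1.IsPath ∧ r1.support ⊆ r.support ∧
      ∀ x ∈ r1.support, x ∈ L → x = m := by
  intro s c r
  induction r with
  | nil =>
    intro _ hc
    refine ⟨_, hc, Walk.nil, Walk.IsPath.nil, by simp, ?_⟩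
    intro x hx _
    simpa using hx
  | @cons a b c hadj q ih =>
    intro hr hc
    by_cases hs : a ∈ L
    · refine ⟨a, hs, Walk.nil, Walk.IsPath.nil, by simp, ?_⟩
      intro x hx _
      simpa using hx
    · obtain ⟨m, hm, r1, h1, h2, h3⟩ := ih hr.of_cons hc
      refine ⟨m, hm, Walk.cons hadj r1, ?_, ?_, ?_⟩
      · rw [Walk.cons_isPath_iff]
        exact ⟨h1, fun hmem => ((Walk.cons_isPath_iff _ _).mp hr).2 (h2 hmem)⟩
      · simpa [Walk.support_cons] using List.cons_subset_cons a h2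
      · intro x hx hxL
        rw [Walk.support_cons, List.mem_cons] at hx
        rcases hx with rfl | hx
        · exact absurd hxL hs
        · exact h3 x hx hxL

lemma aux_edge (htree : tree.IsTree) {t' t'' : T} (p : tree.Walk t' t'')
    (hp : p.IsPath) {Su Sv : Set T}
    (hSu : (tree.induce Su).Connected) (hSv : (tree.induce Sv).Connected)
    {s : T} (hu' : t' ∈ Su) (hus : s ∈ Su) (hvs : s ∈ Sv) (hv'' : t'' ∈ Sv) :
    ∃ t ∈ p.support, t ∈ Su ∧ t ∈ Sv := by
  classical
  have ht := htree.2
  obtain ⟨r0⟩ := htree.1 s t'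
  set r := r0.bypass with hr
  have hrpath : r.IsPath := r0.bypass_isPath
  have hrSu : ∀ x ∈ r.support, x ∈ Su :=
    aux_path_support_subset ht hSu hus hu' hrpath
  obtain ⟨m, hmL, r1, h1, h2, h3⟩ := aux_first p.support r hrpath p.start_mem_support
  have hmSu : m ∈ Su := hrSu m (h2 r1.end_mem_support)
  have hdpath : (p.dropUntil m hmL).IsPath := hp.dropUntil hmL
  set cand := r1.append (p.dropUntil m hmL) with hcand
  have hcpath : cand.IsPath := by
    rw [Walk.isPath_def, Walk.support_append]
    refine List.Nodup.append ((Walk.isPath_def _).mp h1)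
      (((Walk.isPath_def _).mp hdpath).sublist (List.tail_sublist _)) ?_
    intro x hx1 hx2
    have hxp : x ∈ p.support :=
      p.support_dropUntil_subset hmL (List.mem_of_mem_tail hx2)
    have hxm : x = m := h3 x hx1 hxp
    subst hxm
    have hnd := (Walk.isPath_def _).mp hdpath
    rw [(p.dropUntil x hmL).support_eq_cons] at hnd hx2
    simp only [List.tail_cons] at hx2
    exact (List.nodup_cons.mp hnd).1 hx2
  have hmSv : m ∈ Sv := by
    have := aux_path_support_subset ht hSv hvs hv'' hcpath
    exact this m (by rw [hcand, Walk.mem_support_append_iff]; exact Or.inl r1.end_mem_support)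
  exact ⟨m, hmL, hmSu, hmSv⟩
end Aux

/-- restricting a tree decomposition to the path `P` between two nodes
`t', t''`, with bags `Y_t = X_t ∩ (X_{t'} ∪ X_{t''})`, yields a path decomposition of
`H = G[X_{t'} ∪ X_{t''}]`: every vertex of `H` is in some `Y_t`, for every edge of `H`
some `Y_t` contains both endpoints, and each vertex appears in a contiguous stretch of `P`. -/
theorem stmt14 {V T : Type} (G : SimpleGraph V)
    (tree : SimpleGraph T) (td : TreeDecomp G tree)
    (t' t'' : T) (hne : t' ≠ t'')
    (p : tree.Walk t' t'') (hp : p.IsPath) :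
    let Y : T → Set V := fun t => td.bag t ∩ (td.bag t' ∪ td.bag t'')
    (∀ v ∈ td.bag t' ∪ td.bag t'', ∃ t ∈ p.support, v ∈ Y t) ∧
    (∀ u v : V, u ∈ td.bag t' ∪ td.bag t'' → v ∈ td.bag t' ∪ td.bag t'' →
      G.Adj u v → ∃ t ∈ p.support, u ∈ Y t ∧ v ∈ Y t) ∧
    (∀ v : V, ∀ i j l : Fin p.support.length, i ≤ j → j ≤ l →
      v ∈ Y (p.support.get i) → v ∈ Y (p.support.get l) → v ∈ Y (p.support.get j)) := by
  intro Y
  have htree := td.isTree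
  refine ⟨?_, ?_, ?_⟩
  · rintro v (hv | hv)
    · exact ⟨t', p.start_mem_support, hv, Or.inl hv⟩
    · exact ⟨t'', p.end_mem_support, hv, Or.inr hv⟩
  · rintro u v (hu | hu) (hv | hv) hadj
    · exact ⟨t', p.start_mem_support, ⟨hu, Or.inl hu⟩, ⟨hv, Or.inl hv⟩⟩
    · obtain ⟨s, hus, hvs⟩ := td.edge_bag hadj
      obtain ⟨t, htp, htu, htv⟩ := aux_edge htree p hp (td.conn u) (td.conn v) hu hus hvs hv
      exact ⟨t, htp, ⟨htu, Or.inl hu⟩, ⟨htv, Or.inr hv⟩⟩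
    · obtain ⟨s, hus, hvs⟩ := td.edge_bag hadj
      obtain ⟨t, htp, htv, htu⟩ := aux_edge htree p hp (td.conn v) (td.conn u) hv hvs hus hu
      exact ⟨t, htp, ⟨htu, Or.inr hu⟩, ⟨htv, Or.inl hv⟩⟩
    · exact ⟨t'', p.end_mem_support, ⟨hu, Or.inr hu⟩, ⟨hv, Or.inr hv⟩⟩
  · intro v i j l hij hjl hvi hvl
    obtain ⟨c, q, hc, hsupq, hqpath⟩ := aux_prefix p l.1 l.isLt
    have hiq : i.1 < q.support.length := by
      rw [hsupq, List.length_take]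
      have := l.isLt
      have := Fin.le_def.mp (le_trans hij hjl)
      omega
    obtain ⟨c2, w, hc2, hsupw, hwpath⟩ := aux_suffix q i.1 hiq
    have hc2' : c2 = p.support.get i := by
      rw [hc2]
      have : q.support[i.1]'hiq = p.support[i.1]'i.isLt := by
        simp only [hsupq]
        rw [List.getElem_take]
      rw [this, List.get_eq_getElem]
    have hcS : v ∈ td.bag c := by rw [hc]; exact hvl.1
    have hc2S : v ∈ td.bag c2 := by rw [hc2']; exact hvi.1
    have hwsub := aux_path_support_subset htree.2 (td.conn v) hc2S hcS
      (hwpath (hqpath hp))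
    have hmem : p.support.get j ∈ w.support := by
      rw [hsupw, hsupq]
      have hlen : j.1 - i.1 < ((p.support.take (l.1 + 1)).drop i.1).length := by
        rw [List.length_drop, List.length_take]
        have := l.isLt
        have := Fin.le_def.mp hij
        have := Fin.le_def.mp hjl
        omega
      have : ((p.support.take (l.1 + 1)).drop i.1)[j.1 - i.1]'hlen = p.support.get j := by
        rw [List.getElem_drop, List.getElem_take, List.get_eq_getElem]
        congr 1
        have := Fin.le_def.mp hij
        omega
      exact this ▸ List.getElem_mem hlen
    exact ⟨hwsub _ hmem, hvi.2⟩
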